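/- Let a, b, p > 0, let B be Beta(a,b) and E an independent standard exponential. Then P(B ∈ [1 − E/(pw), 1 − E/(pw) + ((p+1)/(2p²))·E²/w²] and E ≤ pw/(p+1)) = O(w^{-(b+1)}) as w → ∞. -/

import Mathlib

open MeasureTheory Filter Real Asymptotics

/-- The Beta(a,b) distribution on ℝ, via its density. -/
noncomputable def betaM (a b : ℝ) : Measure ℝ :=
  volume.withDensity fun x => ENNReal.ofReal
    (if 0 < x ∧ x < 1 then
      x ^ (a - 1) * (1 - x) ^ (b - 1) * (Real.Gamma (a + b) / (Real.Gamma a * Real.Gamma b))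
    else 0)

/-- The generalized gamma GG(c,p) distribution on ℝ, via its density. -/
noncomputable def genGammaM (c p : ℝ) : Measure ℝ :=
  volume.withDensity fun x => ENNReal.ofReal
    (if 0 < x then p / Real.Gamma (c / p) * x ^ (c - 1) * Real.exp (-(x ^ p)) else 0)

/-- The Gamma(r,1) distribution on ℝ, via its density. -/
noncomputable def gammaM (r : ℝ) : Measure ℝ :=
  volume.withDensity fun x => ENNReal.ofReal
    (if 0 < x then x ^ (r - 1) * Real.exp (-x) / Real.Gamma r else 0)

/-- The standard exponential distribution on ℝ, via its density. -/
noncomputable def expM : Measure ℝ :=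
  volume.withDensity fun x => ENNReal.ofReal (if 0 < x then Real.exp (-x) else 0)

lemma rpow_aux (b t w : ℝ) (ht : 0 < t) (hw : 0 < w) :
    (t / w) ^ (b - 1) * (t ^ 2 / w ^ 2) = t ^ (b + 1) * w ^ (-(b + 1)) := by
  rw [Real.div_rpow ht.le hw.le, div_mul_div_comm]
  have h1 : t ^ (b - 1) * t ^ 2 = t ^ (b + 1) := by
    rw [← Real.rpow_natCast t 2, ← Real.rpow_add ht]; ring_nf
  have h2 : w ^ (b - 1) * w ^ 2 = w ^ (b + 1) := by
    rw [← Real.rpow_natCast w 2, ← Real.rpow_add hw]; ring_nf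
  rw [h1, h2, Real.rpow_neg hw.le, div_eq_mul_inv]

lemma sec_bound (a b p w t : ℝ) (ha : 0 < a) (hb : 0 < b) (hp : 0 < p) (hw : 1 ≤ w) :
    betaM a b {x : ℝ | (1 - t / (p * w) ≤ x ∧
        x ≤ 1 - t / (p * w) + (p + 1) / (2 * p ^ 2) * t ^ 2 / w ^ 2) ∧ t ≤ p * w / (p + 1)}
      ≤ ENNReal.ofReal ((max 1 ((p / (p + 1)) ^ (a - 1)) *
          max ((1 / p) ^ (b - 1)) ((1 / (2 * p)) ^ (b - 1)) *
          (Real.Gamma (a + b) / (Real.Gamma a * Real.Gamma b)) * ((p + 1) / (2 * p ^ 2))) *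
          (t ^ (b + 1) * w ^ (-(b + 1)))) := by
  have hw0 : (0 : ℝ) < w := lt_of_lt_of_le one_pos hw
  have hpw : (0 : ℝ) < p * w := mul_pos hp hw0
  set maxA := max 1 ((p / (p + 1)) ^ (a - 1)) with hmaxA
  set maxB := max ((1 / p) ^ (b - 1)) ((1 / (2 * p)) ^ (b - 1)) with hmaxB
  set G := Real.Gamma (a + b) / (Real.Gamma a * Real.Gamma b) with hGdef
  have hG : 0 < G := div_pos (Real.Gamma_pos_of_pos (by linarith))
    (mul_pos (Real.Gamma_pos_of_pos ha) (Real.Gamma_pos_of_pos hb))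
  have hmaxA0 : 0 ≤ maxA := le_trans zero_le_one (le_max_left _ _)
  have hmaxB0 : 0 ≤ maxB := le_trans (Real.rpow_nonneg (by positivity) _) (le_max_left _ _)
  by_cases ht2 : t ≤ p * w / (p + 1)
  · by_cases ht1 : 0 < t
    · -- main case
      have hsle : t * (p + 1) ≤ p * w := (le_div_iff₀ (by linarith)).mp ht2
      have hset : {x : ℝ | (1 - t / (p * w) ≤ x ∧
          x ≤ 1 - t / (p * w) + (p + 1) / (2 * p ^ 2) * t ^ 2 / w ^ 2) ∧ t ≤ p * w / (p + 1)}
          = Set.Icc (1 - t / (p * w)) (1 - t / (p * w) + (p + 1) / (2 * p ^ 2) * t ^ 2 / w ^ 2) := by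
        ext x
        simp only [Set.mem_setOf_eq, Set.mem_Icc, and_iff_left ht2]
      rw [hset, betaM, withDensity_apply _ measurableSet_Icc]
      set M := maxA * ((t / w) ^ (b - 1) * maxB) * G with hMdef
      have hL : (p + 1) / (2 * p ^ 2) * t ^ 2 / w ^ 2 ≤ t / (2 * (p * w)) := by
        rw [div_le_div_iff₀ (by positivity) (by positivity), div_mul_eq_mul_div,
          div_mul_eq_mul_div, div_le_iff₀ (by positivity)]
        nlinarith [mul_le_mul_of_nonneg_left hsle (show (0:ℝ) ≤ 2 * p * w * t by positivity)]
      have key : ∀ x ∈ Set.Icc (1 - t / (p * w))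
          (1 - t / (p * w) + (p + 1) / (2 * p ^ 2) * t ^ 2 / w ^ 2),
          ENNReal.ofReal (if 0 < x ∧ x < 1 then x ^ (a - 1) * (1 - x) ^ (b - 1) * G else 0)
            ≤ ENNReal.ofReal M := by
        intro x hx
        obtain ⟨hxl, hxu⟩ := hx
        apply ENNReal.ofReal_le_ofReal
        split_ifs with h
        · obtain ⟨hx0, hx1⟩ := h
          have h1x : 1 - x ≤ t / (p * w) := by linarith
          have hhalf : t / (2 * (p * w)) = t / (p * w) / 2 := by ring
          have h2x : t / (2 * (p * w)) ≤ 1 - x := by linarith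
          have h1 : t / (p * w) ≤ 1 / (p + 1) := by
            rw [div_le_div_iff₀ hpw (by linarith)]; linarith
          have hxge : p / (p + 1) ≤ x := by
            have he : 1 - 1 / (p + 1) = p / (p + 1) := by field_simp; ring
            linarith
          have htw : (0 : ℝ) < t / w := div_pos ht1 hw0
          have hA : x ^ (a - 1) ≤ maxA := by
            rcases le_total 1 a with hc | hc
            · exact le_trans (Real.rpow_le_one hx0.le hx1.le (by linarith)) (le_max_left _ _)
            · exact le_trans (Real.rpow_le_rpow_of_nonpos (by positivity) hxge (by linarith))
                (le_max_right _ _)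
          have hB : (1 - x) ^ (b - 1) ≤ (t / w) ^ (b - 1) * maxB := by
            have e1 : t / (p * w) = (t / w) * (1 / p) := by ring
            have e2 : t / (2 * (p * w)) = (t / w) * (1 / (2 * p)) := by ring
            rcases le_total 1 b with hc | hc
            · calc (1 - x) ^ (b - 1) ≤ (t / (p * w)) ^ (b - 1) :=
                    Real.rpow_le_rpow (by linarith) h1x (by linarith)
                _ = (t / w) ^ (b - 1) * (1 / p) ^ (b - 1) := by
                    rw [e1, Real.mul_rpow htw.le (by positivity)]
                _ ≤ (t / w) ^ (b - 1) * maxB :=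
                    mul_le_mul_of_nonneg_left (le_max_left _ _) (Real.rpow_nonneg htw.le _)
            · calc (1 - x) ^ (b - 1) ≤ (t / (2 * (p * w))) ^ (b - 1) :=
                    Real.rpow_le_rpow_of_nonpos (by positivity) h2x (by linarith)
                _ = (t / w) ^ (b - 1) * (1 / (2 * p)) ^ (b - 1) := by
                    rw [e2, Real.mul_rpow htw.le (by positivity)]
                _ ≤ (t / w) ^ (b - 1) * maxB :=
                    mul_le_mul_of_nonneg_left (le_max_right _ _) (Real.rpow_nonneg htw.le _)
          apply mul_le_mul_of_nonneg_right _ hG.le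
          exact mul_le_mul hA hB (Real.rpow_nonneg (by linarith) _) hmaxA0
        · have : 0 ≤ M := by
            apply mul_nonneg (mul_nonneg hmaxA0 _) hG.le
            exact mul_nonneg (Real.rpow_nonneg (by positivity) _) hmaxB0
          exact this
      calc ∫⁻ x in Set.Icc (1 - t / (p * w))
            (1 - t / (p * w) + (p + 1) / (2 * p ^ 2) * t ^ 2 / w ^ 2),
            ENNReal.ofReal (if 0 < x ∧ x < 1 then x ^ (a - 1) * (1 - x) ^ (b - 1) * G else 0)
          ≤ ∫⁻ _ in Set.Icc (1 - t / (p * w))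
            (1 - t / (p * w) + (p + 1) / (2 * p ^ 2) * t ^ 2 / w ^ 2), ENNReal.ofReal M :=
            setLIntegral_mono measurable_const key
        _ = ENNReal.ofReal M * volume (Set.Icc (1 - t / (p * w))
            (1 - t / (p * w) + (p + 1) / (2 * p ^ 2) * t ^ 2 / w ^ 2)) := setLIntegral_const _ _
        _ ≤ ENNReal.ofReal ((maxA * maxB * G * ((p + 1) / (2 * p ^ 2))) *
            (t ^ (b + 1) * w ^ (-(b + 1)))) := by
            rw [Real.volume_Icc, ← ENNReal.ofReal_mul (by
              apply mul_nonneg (mul_nonneg hmaxA0 _) hG.le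
              exact mul_nonneg (Real.rpow_nonneg (by positivity) _) hmaxB0)]
            apply ENNReal.ofReal_le_ofReal
            have harea : 1 - t / (p * w) + (p + 1) / (2 * p ^ 2) * t ^ 2 / w ^ 2 -
                (1 - t / (p * w)) = (p + 1) / (2 * p ^ 2) * t ^ 2 / w ^ 2 := by ring
            rw [harea]
            have hcalc : M * ((p + 1) / (2 * p ^ 2) * t ^ 2 / w ^ 2) =
                (maxA * maxB * G * ((p + 1) / (2 * p ^ 2))) * ((t / w) ^ (b - 1) * (t ^ 2 / w ^ 2)) := by
              rw [hMdef]; ring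
            rw [hcalc, rpow_aux b t w ht1 hw0]
    · -- t ≤ 0 : set contained in Ici 1, measure zero
      push_neg at ht1
      have hsub : {x : ℝ | (1 - t / (p * w) ≤ x ∧
          x ≤ 1 - t / (p * w) + (p + 1) / (2 * p ^ 2) * t ^ 2 / w ^ 2) ∧ t ≤ p * w / (p + 1)}
          ⊆ Set.Ici (1 : ℝ) := by
        intro x hx
        have h1 : t / (p * w) ≤ 0 := div_nonpos_of_nonpos_of_nonneg ht1 hpw.le
        have := hx.1.1
        simp only [Set.mem_Ici]
        linarith
      refine le_trans (measure_mono hsub) ?_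
      have hzero : betaM a b (Set.Ici (1 : ℝ)) = 0 := by
        rw [betaM, withDensity_apply _ measurableSet_Ici]
        have h0 : ∀ᵐ x ∂volume, x ∈ Set.Ici (1 : ℝ) → ENNReal.ofReal
            (if 0 < x ∧ x < 1 then
              x ^ (a - 1) * (1 - x) ^ (b - 1) * (Real.Gamma (a + b) / (Real.Gamma a * Real.Gamma b))
            else 0) = (0 : ENNReal) :=
          ae_of_all _ fun x hx => by
            rw [if_neg (fun h => absurd h.2 (not_lt.mpr hx)), ENNReal.ofReal_zero]
        rw [setLIntegral_congr_fun_ae measurableSet_Ici h0, lintegral_zero]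
      rw [hzero]
      exact zero_le
  · -- t > p*w/(p+1): set empty
    have hempty : {x : ℝ | (1 - t / (p * w) ≤ x ∧
        x ≤ 1 - t / (p * w) + (p + 1) / (2 * p ^ 2) * t ^ 2 / w ^ 2) ∧ t ≤ p * w / (p + 1)}
        = ∅ := by
      ext x; simp only [Set.mem_setOf_eq, Set.mem_empty_iff_false, iff_false]
      exact fun h => ht2 h.2
    rw [hempty, measure_empty]
    exact zero_le

instance (a b : ℝ) : SFinite (betaM a b) := by unfold betaM; infer_instance

instance : SFinite expM := by unfold expM; infer_instance

theorem beta_exp_interval_prob_bigO (a b p : ℝ) (ha : 0 < a) (hb : 0 < b) (hp : 0 < p) :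
    (fun w : ℝ =>
        (((betaM a b).prod expM) {q : ℝ × ℝ |
            (1 - q.2 / (p * w) ≤ q.1 ∧
              q.1 ≤ 1 - q.2 / (p * w) + (p + 1) / (2 * p ^ 2) * q.2 ^ 2 / w ^ 2) ∧
            q.2 ≤ p * w / (p + 1)}).toReal)
      =O[atTop] fun w : ℝ => w ^ (-(b + 1)) := by
  set K : ℝ := max 1 ((p / (p + 1)) ^ (a - 1)) *
      max ((1 / p) ^ (b - 1)) ((1 / (2 * p)) ^ (b - 1)) *
      (Real.Gamma (a + b) / (Real.Gamma a * Real.Gamma b)) * ((p + 1) / (2 * p ^ 2)) with hK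
  have hG : 0 < Real.Gamma (a + b) / (Real.Gamma a * Real.Gamma b) :=
    div_pos (Real.Gamma_pos_of_pos (by linarith))
      (mul_pos (Real.Gamma_pos_of_pos ha) (Real.Gamma_pos_of_pos hb))
  have hK0 : 0 ≤ K := by
    apply mul_nonneg (mul_nonneg (mul_nonneg ?_ ?_) hG.le) (by positivity)
    · exact le_trans zero_le_one (le_max_left _ _)
    · exact le_trans (Real.rpow_nonneg (by positivity) _) (le_max_left _ _)
  have hGb2 : 0 < Real.Gamma (b + 2) := Real.Gamma_pos_of_pos (by linarith)
  rw [Asymptotics.isBigO_iff]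
  refine ⟨K * Real.Gamma (b + 2), ?_⟩
  filter_upwards [Filter.eventually_ge_atTop (1 : ℝ)] with w hw
  have hw0 : (0 : ℝ) < w := lt_of_lt_of_le one_pos hw
  rw [Real.norm_eq_abs, Real.norm_eq_abs, abs_of_nonneg ENNReal.toReal_nonneg,
    abs_of_nonneg (Real.rpow_nonneg hw0.le _)]
  apply ENNReal.toReal_le_of_le_ofReal (by positivity)
  have hS : MeasurableSet {q : ℝ × ℝ |
      (1 - q.2 / (p * w) ≤ q.1 ∧
        q.1 ≤ 1 - q.2 / (p * w) + (p + 1) / (2 * p ^ 2) * q.2 ^ 2 / w ^ 2) ∧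
      q.2 ≤ p * w / (p + 1)} := by
    simp only [Set.setOf_and]
    refine MeasurableSet.inter (MeasurableSet.inter ?_ ?_) ?_
    · exact measurableSet_le (by fun_prop) (by fun_prop)
    · exact measurableSet_le (by fun_prop) (by fun_prop)
    · exact measurableSet_le (by fun_prop) (by fun_prop)
  rw [Measure.prod_apply_symm hS]
  have hfmeas : Measurable fun x : ℝ => ENNReal.ofReal (if 0 < x then Real.exp (-x) else 0) := by
    apply Measurable.ennreal_ofReal
    exact Measurable.ite measurableSet_Ioi (by fun_prop) measurable_const
  have hgmeas : Measurable fun y : ℝ =>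
      ENNReal.ofReal (K * (y ^ (b + 1) * w ^ (-(b + 1)))) := by
    apply Measurable.ennreal_ofReal
    fun_prop
  have hint : IntegrableOn
      (fun y : ℝ => Real.exp (-y) * (K * (y ^ (b + 1) * w ^ (-(b + 1))))) (Set.Ioi 0) := by
    have h0 : IntegrableOn (fun y : ℝ => Real.exp (-y) * y ^ (b + 2 - 1)) (Set.Ioi 0) :=
      Real.GammaIntegral_convergent (by linarith)
    have h1 := h0.const_mul (K * w ^ (-(b + 1)))
    exact MeasureTheory.IntegrableOn.congr_fun h1
      (fun y _ => by rw [show b + 2 - 1 = b + 1 by ring]; ring) measurableSet_Ioi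
  calc
    ∫⁻ t, betaM a b ((fun x => (x, t)) ⁻¹' {q : ℝ × ℝ |
        (1 - q.2 / (p * w) ≤ q.1 ∧
          q.1 ≤ 1 - q.2 / (p * w) + (p + 1) / (2 * p ^ 2) * q.2 ^ 2 / w ^ 2) ∧
        q.2 ≤ p * w / (p + 1)}) ∂expM
      ≤ ∫⁻ t, ENNReal.ofReal (K * (t ^ (b + 1) * w ^ (-(b + 1)))) ∂expM :=
        lintegral_mono fun t => sec_bound a b p w t ha hb hp hw
    _ = ∫⁻ t, ENNReal.ofReal (if 0 < t then Real.exp (-t) else 0) *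
          ENNReal.ofReal (K * (t ^ (b + 1) * w ^ (-(b + 1)))) ∂volume := by
        rw [expM, lintegral_withDensity_eq_lintegral_mul volume hfmeas hgmeas]; rfl
    _ = ∫⁻ t, ENNReal.ofReal
          (Set.indicator (Set.Ioi 0)
            (fun t => Real.exp (-t) * (K * (t ^ (b + 1) * w ^ (-(b + 1))))) t) ∂volume := by
        apply lintegral_congr
        intro t
        rw [Set.indicator_apply]
        simp only [Set.mem_Ioi]
        split_ifs with h
        · rw [ENNReal.ofReal_mul (Real.exp_nonneg _)]
        · simp
    _ = ENNReal.ofReal (∫ t, Set.indicator (Set.Ioi 0)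
          (fun t => Real.exp (-t) * (K * (t ^ (b + 1) * w ^ (-(b + 1))))) t) := by
        rw [← ofReal_integral_eq_lintegral_ofReal
          (hint.integrable_indicator measurableSet_Ioi)]
        refine ae_of_all _ fun t => ?_
        rw [Set.indicator_apply]
        split_ifs with h
        · have : (0:ℝ) < t := h
          positivity
        · exact le_refl 0
    _ ≤ ENNReal.ofReal (K * Real.Gamma (b + 2) * w ^ (-(b + 1))) := by
        apply ENNReal.ofReal_le_ofReal
        rw [MeasureTheory.integral_indicator measurableSet_Ioi]
        have heq : ∀ t ∈ Set.Ioi (0:ℝ),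
            Real.exp (-t) * (K * (t ^ (b + 1) * w ^ (-(b + 1)))) =
            (K * w ^ (-(b + 1))) * (Real.exp (-t) * t ^ (b + 2 - 1)) := by
          intro t _
          rw [show b + 2 - 1 = b + 1 by ring]; ring
        rw [setIntegral_congr_fun measurableSet_Ioi heq, MeasureTheory.integral_const_mul,
          ← Real.Gamma_eq_integral (by linarith : (0:ℝ) < b + 2)]
        apply le_of_eq; ring
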